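/- Let α > 0 and θ ∈ ℝ. The function H(ε,δ) = (1−δ)log(1−δ) − (1−δ−ε)log(1−δ−ε) − δ log α − 2ε log ε − (1−ε)log(1−ε) + εθ on the domain 0 ≤ δ ≤ 1, 0 ≤ ε ≤ 1−δ (with 0 log 0 = 0), maximized first over δ for fixed ε ∈ [0,1], attains its maximum at δ = 0 if ε ≥ 1−α and at δ = 1 − ε/(1−α) if ε < 1−α (assuming 0 < α < 1). -/

import Mathlib

open Real

noncomputable def Fa (α θ ε : ℝ) : ℝ → ℝ := fun δ =>
  (1 - δ) * log (1 - δ) - (1 - δ - ε) * log (1 - δ - ε) - δ * log α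
    - 2 * ε * log ε - (1 - ε) * log (1 - ε) + ε * θ

lemma Fa_deriv (α θ ε δ : ℝ) (h1 : (1:ℝ) - δ ≠ 0) (h2 : 1 - δ - ε ≠ 0) :
    HasDerivAt (Fa α θ ε) (log (1 - δ - ε) - log (1 - δ) - log α) δ := by
  have hA : HasDerivAt (fun x : ℝ => (1 - x) * log (1 - x)) ((log (1 - δ) + 1) * (-1)) δ :=
    (Real.hasDerivAt_mul_log h1).comp δ ((hasDerivAt_id δ).const_sub 1)
  have hB : HasDerivAt (fun x : ℝ => (1 - x - ε) * log (1 - x - ε))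
      ((log (1 - δ - ε) + 1) * (-1)) δ := by
    have := (Real.hasDerivAt_mul_log h2).comp δ (((hasDerivAt_id δ).const_sub 1).sub_const ε)
    exact this
  have hC : HasDerivAt (fun x : ℝ => x * log α) (log α) δ := by
    simpa using (hasDerivAt_id δ).mul_const (log α)
  have := (((hA.sub hB).sub hC).sub_const (2 * ε * log ε)).sub_const
      ((1 - ε) * log (1 - ε)) |>.add_const (ε * θ)
  refine this.congr_deriv ?_
  ring

lemma Fa_cont (α θ ε : ℝ) : Continuous (Fa α θ ε) := by
  unfold Fa
  have h1 : Continuous fun δ : ℝ => (1 - δ) * log (1 - δ) :=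
    Real.continuous_mul_log.comp (by continuity)
  have h2 : Continuous fun δ : ℝ => (1 - δ - ε) * log (1 - δ - ε) :=
    Real.continuous_mul_log.comp (by continuity)
  continuity

lemma Fa_mono (α θ ε b : ℝ) (hα0 : 0 < α) (hα1 : α < 1) (hε0 : 0 ≤ ε)
    (hcond : ∀ δ : ℝ, 0 < δ → δ < b → ε ≤ (1 - δ) * (1 - α) ∧ δ < 1 - ε) :
    MonotoneOn (Fa α θ ε) (Set.Icc 0 b) := by
  rcases le_or_gt b 0 with hb | hb
  · intro x hx y hy hxy
    have : x = y := le_antisymm hxy (by linarith [hx.1, hx.2, hy.1, hy.2])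
    simp [this]
  apply monotoneOn_of_deriv_nonneg (convex_Icc 0 b) (Fa_cont α θ ε).continuousOn
  · rw [interior_Icc]
    intro x hx
    obtain ⟨hc, hlt⟩ := hcond x hx.1 hx.2
    have h1 : (0:ℝ) < 1 - x := by nlinarith
    have h2 : (0:ℝ) < 1 - x - ε := by nlinarith
    exact (Fa_deriv α θ ε x h1.ne' h2.ne').differentiableAt.differentiableWithinAt
  · rw [interior_Icc]
    intro x hx
    obtain ⟨hc, hlt⟩ := hcond x hx.1 hx.2
    have h1 : (0:ℝ) < 1 - x := by nlinarith
    have h2 : (0:ℝ) < 1 - x - ε := by nlinarith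
    rw [(Fa_deriv α θ ε x h1.ne' h2.ne').deriv]
    have hle : α * (1 - x) ≤ 1 - x - ε := by nlinarith
    have hpos : 0 < α * (1 - x) := by positivity
    have := Real.log_le_log hpos hle
    rw [Real.log_mul hα0.ne' h1.ne'] at this
    linarith

lemma Fa_anti (α θ ε b : ℝ) (hα0 : 0 < α) (hα1 : α < 1) (hε0 : 0 ≤ ε)
    (hcond : ∀ δ : ℝ, b < δ → δ < 1 - ε → (1 - δ) * (1 - α) ≤ ε) :
    AntitoneOn (Fa α θ ε) (Set.Icc b (1 - ε)) := by
  apply antitoneOn_of_deriv_nonpos (convex_Icc b (1 - ε)) (Fa_cont α θ ε).continuousOn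
  · rw [interior_Icc]
    intro x hx
    have h1 : (0:ℝ) < 1 - x := by linarith [hx.2]
    have h2 : (0:ℝ) < 1 - x - ε := by linarith [hx.2]
    exact (Fa_deriv α θ ε x h1.ne' h2.ne').differentiableAt.differentiableWithinAt
  · rw [interior_Icc]
    intro x hx
    have hc := hcond x hx.1 hx.2
    have h2 : (0:ℝ) < 1 - x - ε := by linarith [hx.2]
    have h1 : (0:ℝ) < 1 - x := by nlinarith
    rw [(Fa_deriv α θ ε x h1.ne' h2.ne').deriv]
    have hle : 1 - x - ε ≤ α * (1 - x) := by nlinarith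
    have := Real.log_le_log h2 hle
    rw [Real.log_mul hα0.ne' h1.ne'] at this
    linarith

open Real in
theorem stmt_18 (α θ : ℝ) (hα0 : 0 < α) (hα1 : α < 1)
    (H : ℝ → ℝ → ℝ)
    (hH : ∀ ε δ : ℝ, H ε δ =
      (1 - δ) * log (1 - δ) - (1 - δ - ε) * log (1 - δ - ε) - δ * log α
        - 2 * ε * log ε - (1 - ε) * log (1 - ε) + ε * θ) :
    ∀ ε : ℝ, 0 ≤ ε → ε ≤ 1 →
      ((1 - α ≤ ε → ∀ δ : ℝ, 0 ≤ δ → ε ≤ 1 - δ → H ε δ ≤ H ε 0) ∧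
        (ε < 1 - α → ∀ δ : ℝ, 0 ≤ δ → ε ≤ 1 - δ → H ε δ ≤ H ε (1 - ε / (1 - α)))) := by
  intro ε hε0 hε1
  have hHF : ∀ δ, H ε δ = Fa α θ ε δ := fun δ => hH ε δ
  constructor
  · intro hcase δ hδ0 hδ1
    rw [hHF, hHF]
    have hanti := Fa_anti α θ ε 0 hα0 hα1 hε0 (fun x hx hx' => by nlinarith)
    exact hanti ⟨le_refl 0, by linarith⟩ ⟨hδ0, by linarith⟩ hδ0
  · intro hcase δ hδ0 hδ1
    rw [hHF, hHF]
    set b := 1 - ε / (1 - α) with hbdef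
    have hα' : (0:ℝ) < 1 - α := by linarith
    have hεb : ε / (1 - α) < 1 := (div_lt_one hα').mpr hcase
    have hb0 : 0 ≤ b := by simp [hbdef]; linarith
    have hbε : b ≤ 1 - ε := by
      have : ε ≤ ε / (1 - α) := by
        rw [le_div_iff₀ hα']; nlinarith
      simp [hbdef]; linarith
    have hkey : (1 - b) * (1 - α) = ε := by
      rw [hbdef, sub_sub_cancel, div_mul_cancel₀ _ hα'.ne']
    rcases le_or_gt δ b with hle | hlt
    · have hmono := Fa_mono α θ ε b hα0 hα1 hε0 (fun x hx hx' => by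
        constructor
        · nlinarith
        · linarith)
      exact hmono ⟨hδ0, hle⟩ ⟨hb0, le_refl b⟩ hle
    · have hanti := Fa_anti α θ ε b hα0 hα1 hε0 (fun x hx hx' => by nlinarith)
      exact hanti ⟨le_refl b, hbε⟩ ⟨hlt.le, by linarith⟩ hlt.le
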